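/- Let V be a vector space over a field, W a subspace, S(W) a subsemigroup of L(W), and f ∈ L_{S(W)}(V). Then f is a regular element of L_{S(W)}(V) if and only if (i) f↾W is a regular element of S(W), and (ii) R(f) ∩ W = R(f↾W). -/

import Mathlib

open Set

/-- `S` is a subsemigroup of `L(M)` (closed under composition). -/
def LIsSubsemigroup {K M : Type*} [Field K] [AddCommGroup M] [Module K M]
    (S : Set (M →ₗ[K] M)) : Prop :=
  ∀ a ∈ S, ∀ b ∈ S, a ∘ₗ b ∈ S

/-- `S` is a subgroup of `Aut(M)`. -/
def LIsSubgroupOfAut {K M : Type*} [Field K] [AddCommGroup M] [Module K M]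
    (S : Set (M →ₗ[K] M)) : Prop :=
  LIsSubsemigroup S ∧ (∀ a ∈ S, Function.Bijective a) ∧ (LinearMap.id ∈ S) ∧
    ∀ a ∈ S, ∃ b ∈ S, a ∘ₗ b = LinearMap.id ∧ b ∘ₗ a = LinearMap.id

/-- `S` is a regular semigroup of linear maps: `∀ a ∈ S, ∃ b ∈ S, aba = a`
(composed left to right, i.e. `x ↦ a (b (a x))`). -/
def LIsRegularOn {K M : Type*} [Field K] [AddCommGroup M] [Module K M]
    (S : Set (M →ₗ[K] M)) : Prop :=
  ∀ a ∈ S, ∃ b ∈ S, a ∘ₗ b ∘ₗ a = a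

/-- `S` is an inverse semigroup of linear maps. -/
def LIsInverseOn {K M : Type*} [Field K] [AddCommGroup M] [Module K M]
    (S : Set (M →ₗ[K] M)) : Prop :=
  ∀ a ∈ S, ∃! b, b ∈ S ∧ a ∘ₗ b ∘ₗ a = a ∧ b ∘ₗ a ∘ₗ b = b

/-- `u` is a unit of the linear monoid `S`. -/
def LIsUnitOn {K M : Type*} [Field K] [AddCommGroup M] [Module K M]
    (S : Set (M →ₗ[K] M)) (u : M →ₗ[K] M) : Prop :=
  u ∈ S ∧ ∃ v ∈ S, u ∘ₗ v = LinearMap.id ∧ v ∘ₗ u = LinearMap.id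

/-- `a` is a unit-regular element of `S`. -/
def LUnitRegularElem {K M : Type*} [Field K] [AddCommGroup M] [Module K M]
    (S : Set (M →ₗ[K] M)) (a : M →ₗ[K] M) : Prop :=
  ∃ u, LIsUnitOn S u ∧ a ∘ₗ u ∘ₗ a = a

/-- `S` is a unit-regular linear monoid. -/
def LIsUnitRegularOn {K M : Type*} [Field K] [AddCommGroup M] [Module K M]
    (S : Set (M →ₗ[K] M)) : Prop :=
  ∀ a ∈ S, LUnitRegularElem S a

/-- `G` is a subgroup contained in the semigroup `S` of linear maps. -/
def LIsSubgroupIn {K M : Type*} [Field K] [AddCommGroup M] [Module K M]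
    (S G : Set (M →ₗ[K] M)) : Prop :=
  G ⊆ S ∧ (∀ a ∈ G, ∀ b ∈ G, a ∘ₗ b ∈ G) ∧
    ∃ e ∈ G, (∀ a ∈ G, a ∘ₗ e = a ∧ e ∘ₗ a = a) ∧
      ∀ a ∈ G, ∃ b ∈ G, a ∘ₗ b = e ∧ b ∘ₗ a = e

/-- `S` is a completely regular semigroup of linear maps: every element
belongs to a subgroup of `S`. -/
def LIsCompletelyRegularOn {K M : Type*} [Field K] [AddCommGroup M] [Module K M]
    (S : Set (M →ₗ[K] M)) : Prop :=
  ∀ a ∈ S, ∃ G, LIsSubgroupIn S G ∧ a ∈ G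

/-- The semigroup `L_{S(W)}(V)` of all linear self-maps of `V` that leave `W`
invariant and whose restriction to `W` lies in `S`. -/
def LSemi {K V : Type*} [Field K] [AddCommGroup V] [Module K V] (W : Submodule K V)
    (S : Set (W →ₗ[K] W)) : Set (V →ₗ[K] V) :=
  {f | ∃ h : ∀ x ∈ W, f x ∈ W, f.restrict h ∈ S}

theorem stmt9 {K V : Type*} [Field K] [AddCommGroup V] [Module K V]
    (W : Submodule K V) (S : Set (W →ₗ[K] W)) (hS : LIsSubsemigroup S)
    (f : V →ₗ[K] V) (h : ∀ x ∈ W, f x ∈ W) (hf : f.restrict h ∈ S) :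
    (∃ g ∈ LSemi W S, f ∘ₗ g ∘ₗ f = f) ↔
      ((∃ b ∈ S, f.restrict h ∘ₗ b ∘ₗ f.restrict h = f.restrict h) ∧
       LinearMap.range f ⊓ W = (LinearMap.range (f.restrict h)).map W.subtype) := by
  constructor
  · rintro ⟨g, ⟨hgW, hgS⟩, hfgf⟩
    have happ : ∀ v, f (g (f v)) = f v := by
      intro v
      have := LinearMap.congr_fun hfgf v
      simpa using this
    constructor
    · refine ⟨g.restrict hgW, hgS, ?_⟩
      ext w
      simp only [LinearMap.comp_apply, LinearMap.restrict_coe_apply]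
      exact happ w
    · apply le_antisymm
      · rintro x hx
        obtain ⟨hx1, hx2⟩ := Submodule.mem_inf.1 hx
        obtain ⟨v, rfl⟩ := hx1
        refine Submodule.mem_map.2 ⟨f.restrict h ⟨g (f v), hgW _ hx2⟩, ⟨_, rfl⟩, ?_⟩
        simp only [Submodule.coe_subtype, LinearMap.restrict_coe_apply]
        exact happ v
      · rintro x hx
        obtain ⟨y, ⟨w, rfl⟩, rfl⟩ := Submodule.mem_map.1 hx
        refine Submodule.mem_inf.2 ⟨⟨(w : V), ?_⟩, (f.restrict h w).2⟩
        simp [LinearMap.restrict_coe_apply]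
  · rintro ⟨⟨b, hbS, hb⟩, hrange⟩
    classical
    set Rf := LinearMap.range f with hRfdef
    set U := LinearMap.range f ⊓ W with hUdef
    have hUW : U ≤ W := inf_le_right
    have hULE : U ≤ Rf := inf_le_left
    obtain ⟨C', hC'⟩ := Submodule.exists_isCompl (U.comap Rf.subtype)
    set R₁ := C'.map Rf.subtype with hR₁def
    have hR₁le : R₁ ≤ Rf := by
      rintro x hx
      obtain ⟨y, _, rfl⟩ := Submodule.mem_map.1 hx
      exact y.2
    have hsup : U ⊔ R₁ = Rf := by
      have ht : (U.comap Rf.subtype) ⊔ C' = ⊤ := hC'.sup_eq_top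
      calc U ⊔ R₁ = ((U.comap Rf.subtype).map Rf.subtype) ⊔ R₁ := by
             rw [Submodule.map_comap_subtype, inf_eq_right.2 hULE]
        _ = ((U.comap Rf.subtype) ⊔ C').map Rf.subtype := by
             rw [Submodule.map_sup]
        _ = Rf := by rw [ht, Submodule.map_top, Submodule.range_subtype]
    have hUR : U ⊓ R₁ = ⊥ := by
      have ht : (U.comap Rf.subtype) ⊓ C' = ⊥ := hC'.inf_eq_bot
      calc U ⊓ R₁ = ((U.comap Rf.subtype).map Rf.subtype) ⊓ R₁ := by
             rw [Submodule.map_comap_subtype, inf_eq_right.2 hULE]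
        _ = ((U.comap Rf.subtype) ⊓ C').map Rf.subtype := by
             rw [Submodule.map_inf _ (Submodule.injective_subtype Rf)]
        _ = ⊥ := by rw [ht, Submodule.map_bot]
    have hWR : W ⊓ R₁ = ⊥ := by
      rw [← hUR]
      refine le_antisymm ?_ (le_inf (inf_le_left.trans hUW) inf_le_right)
      exact le_inf (le_inf (inf_le_right.trans hR₁le) inf_le_left) inf_le_right
    obtain ⟨C, hC⟩ := Submodule.exists_isCompl (W ⊔ R₁)
    have h1 : IsCompl W (R₁ ⊔ C) := by
      constructor
      · rw [disjoint_iff, eq_bot_iff]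
        rintro x hx
        obtain ⟨hxW, hx2⟩ := Submodule.mem_inf.1 hx
        obtain ⟨r, hr, c, hc, rfl⟩ := Submodule.mem_sup.1 hx2
        have hcWR : c ∈ W ⊔ R₁ := by
          have : c = (r + c) - r := by abel
          rw [this]
          exact Submodule.sub_mem _ (Submodule.mem_sup_left hxW) (Submodule.mem_sup_right hr)
        have hc0 : c = 0 := by
          have := hC.inf_eq_bot
          have : c ∈ ((W ⊔ R₁) ⊓ C : Submodule K V) := Submodule.mem_inf.2 ⟨hcWR, hc⟩
          simpa [hC.inf_eq_bot] using this
        subst hc0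
        have : r ∈ W ⊓ R₁ := Submodule.mem_inf.2 ⟨by simpa using hxW, hr⟩
        simpa [hWR] using this
      · rw [codisjoint_iff, ← sup_assoc]
        exact hC.sup_eq_top
    have h2 : IsCompl R₁ (W ⊔ C) := by
      constructor
      · rw [disjoint_iff, eq_bot_iff]
        rintro x hx
        obtain ⟨hxR, hx2⟩ := Submodule.mem_inf.1 hx
        obtain ⟨w, hw, c, hc, rfl⟩ := Submodule.mem_sup.1 hx2
        have hcWR : c ∈ W ⊔ R₁ := by
          have : c = (w + c) - w := by abel
          rw [this]
          exact Submodule.sub_mem _ (Submodule.mem_sup_right hxR) (Submodule.mem_sup_left hw)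
        have hc0 : c = 0 := by
          have : c ∈ ((W ⊔ R₁) ⊓ C : Submodule K V) := Submodule.mem_inf.2 ⟨hcWR, hc⟩
          simpa [hC.inf_eq_bot] using this
        subst hc0
        have : w ∈ W ⊓ R₁ := Submodule.mem_inf.2 ⟨hw, by simpa using hxR⟩
        simpa [hWR] using this
      · rw [codisjoint_iff, ← sup_assoc, sup_comm R₁ W]
        exact hC.sup_eq_top
    set πW : V →ₗ[K] W := Submodule.linearProjOfIsCompl W (R₁ ⊔ C) h1 with hπW
    set πR : V →ₗ[K] R₁ := Submodule.linearProjOfIsCompl R₁ (W ⊔ C) h2 with hπR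
    obtain ⟨sec, hsec⟩ := f.rangeRestrict.exists_rightInverse_of_surjective
      f.range_rangeRestrict
    have hfs : ∀ y : Rf, f (sec y) = (y : V) := by
      intro y
      have := LinearMap.congr_fun hsec y
      exact congrArg Subtype.val this
    set g : V →ₗ[K] V :=
      W.subtype.comp (b.comp πW) + (sec.comp (Submodule.inclusion hR₁le)).comp πR with hg
    have hπRW : ∀ x ∈ W, πR x = 0 := fun x hx =>
      Submodule.linearProjOfIsCompl_apply_right' h2 (Submodule.mem_sup_left hx)
    have hπWW : ∀ (x : V) (hx : x ∈ W), πW x = ⟨x, hx⟩ := fun x hx =>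
      Submodule.linearProjOfIsCompl_apply_left h1 ⟨x, hx⟩
    have hgW : ∀ x ∈ W, g x ∈ W := by
      intro x hx
      have : g x = (b ⟨x, hx⟩ : V) := by
        simp [hg, hπRW x hx, hπWW x hx]
      rw [this]
      exact (b ⟨x, hx⟩).2
    have hgres : g.restrict hgW = b := by
      ext x
      simp only [LinearMap.restrict_coe_apply]
      simp [hg, hπRW x x.2, hπWW x x.2]
    refine ⟨g, ⟨hgW, by rw [hgres]; exact hbS⟩, ?_⟩
    -- key: f (b u) = u for u ∈ U
    have hkey : ∀ (u : V) (hu : u ∈ U), f ((b ⟨u, hUW hu⟩ : W) : V) = u := by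
      intro u hu
      have hu' : u ∈ (LinearMap.range (f.restrict h)).map W.subtype := by
        rw [← hrange]; exact hu
      obtain ⟨y, ⟨w', rfl⟩, hy⟩ := Submodule.mem_map.1 hu'
      have he : (⟨u, hUW hu⟩ : W) = f.restrict h w' := by
        apply Subtype.ext; exact hy.symm
      rw [he]
      have := LinearMap.congr_fun hb w'
      calc f ((b (f.restrict h w') : W) : V)
          = ((f.restrict h) (b (f.restrict h w')) : V) := by
            rw [LinearMap.restrict_coe_apply]
        _ = ((f.restrict h) w' : V) := by
            rw [show (f.restrict h) (b (f.restrict h w')) = (f.restrict h) w' by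
              simpa using this]
        _ = u := hy
    ext v
    simp only [LinearMap.comp_apply]
    have hyRf : f v ∈ Rf := ⟨v, rfl⟩
    have hyUR : f v ∈ U ⊔ R₁ := by rw [hsup]; exact hyRf
    obtain ⟨u, hu, r, hr, hur⟩ := Submodule.mem_sup.1 hyUR
    have hπWy : πW (f v) = ⟨u, hUW hu⟩ := by
      rw [← hur, map_add, hπWW u (hUW hu),
        show πW r = 0 from Submodule.linearProjOfIsCompl_apply_right' h1 (Submodule.mem_sup_left hr),
        add_zero]
    have hπRy : πR (f v) = ⟨r, hr⟩ := by
      rw [← hur, map_add, hπRW u (hUW hu),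
        show πR r = ⟨r, hr⟩ from Submodule.linearProjOfIsCompl_apply_left h2 ⟨r, hr⟩,
        zero_add]
    have : g (f v) = (b ⟨u, hUW hu⟩ : V) + sec (Submodule.inclusion hR₁le ⟨r, hr⟩) := by
      simp [hg, hπWy, hπRy]
    rw [this, map_add, hkey u hu, hfs]
    simpa [Submodule.coe_inclusion] using hur
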